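/- arXiv:1407.7263 — 2 statements merged into one kernel-verified Lean document; each statement's English description precedes it below -/
import Mathlib

section
/- Every connected cubic identifiable finite simple graph G of order n and girth at least 5 has identifying code number γID(G) ≤ (31/45)·n. -/
/-- A graph is *identifiable* if no two distinct vertices have the same closed
neighbourhood. -/
def SimpleGraph.Identifiable {V : Type*} (G : SimpleGraph V) : Prop :=
  ∀ u v : V, insert u (G.neighborSet u) = insert v (G.neighborSet v) → u = v

/-- A set of vertices is *dominating* if every vertex is equal or adjacent to a
member of the set. -/
def SimpleGraph.DominatingSet {V : Type*} (G : SimpleGraph V) (D : Set V) : Prop :=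
  ∀ v : V, ∃ d ∈ D, d = v ∨ G.Adj d v

/-- A set `C` is an *identifying code* if it is dominating and every two distinct
vertices have different closed neighbourhoods within `C`. -/
def SimpleGraph.IdentifyingCode {V : Type*} (G : SimpleGraph V) (C : Set V) : Prop :=
  G.DominatingSet C ∧
    ∀ u v : V, u ≠ v →
      insert u (G.neighborSet u) ∩ C ≠ insert v (G.neighborSet v) ∩ C

/-- The identifying code number: the minimum size of an identifying code. -/
noncomputable def SimpleGraph.gammaID {V : Type*} (G : SimpleGraph V) : ℕ :=
  sInf {k : ℕ | ∃ C : Set V, G.IdentifyingCode C ∧ C.ncard = k}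

section Aux

set_option linter.unusedSectionVars false

open Finset SimpleGraph

variable {V : Type*} [Fintype V] [DecidableEq V]

omit [Fintype V] in
lemma binom_sum (T : Finset V) (p q : ℝ) :
    ∑ C ∈ T.powerset, p ^ C.card * q ^ (T.card - C.card) = (p + q) ^ T.card := by
  rw [← Finset.prod_const, Finset.prod_add]
  apply Finset.sum_congr rfl
  intro t ht
  rw [prod_const, prod_const, card_sdiff_of_subset (mem_powerset.mp ht)]

lemma indep_sum (S : Finset V) (p q : ℝ) (hpq : p + q = 1) :
    ∑ C ∈ (univ : Finset V).powerset,
      (p ^ C.card * q ^ (Fintype.card V - C.card)) * (if S ∩ C = ∅ then (1:ℝ) else 0)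
      = q ^ S.card := by
  have h1 : ∀ C : Finset V,
      (p ^ C.card * q ^ (Fintype.card V - C.card)) * (if S ∩ C = ∅ then (1:ℝ) else 0)
      = if S ∩ C = ∅ then p ^ C.card * q ^ (Fintype.card V - C.card) else 0 := by
    intro C; split <;> ring
  simp_rw [h1, ← Finset.sum_filter]
  have h2 : (univ : Finset V).powerset.filter (fun C => S ∩ C = ∅) = (univ \ S).powerset := by
    ext C
    simp only [mem_filter, mem_powerset, subset_sdiff, subset_univ, true_and]
    rw [← Finset.disjoint_iff_inter_eq_empty]
    exact disjoint_comm
  rw [h2]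
  have hcards : (univ \ S).card + S.card = Fintype.card V := by
    have := card_le_card (subset_univ S)
    rw [card_sdiff_of_subset (subset_univ S), card_univ] at *
    omega
  have h3 : ∀ C ∈ (univ \ S).powerset,
      p ^ C.card * q ^ (Fintype.card V - C.card)
      = (p ^ C.card * q ^ ((univ \ S).card - C.card)) * q ^ S.card := by
    intro C hC
    have hle : C.card ≤ (univ \ S).card := card_le_card (mem_powerset.mp hC)
    rw [mul_assoc, ← pow_add]
    congr 2
    omega
  rw [Finset.sum_congr rfl h3, ← Finset.sum_mul, binom_sum, hpq, one_pow, one_mul]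

lemma sum_w_one (p q : ℝ) (hpq : p + q = 1) :
    ∑ C ∈ (univ : Finset V).powerset, p ^ C.card * q ^ (Fintype.card V - C.card) = 1 := by
  have := indep_sum (V := V) ∅ p q hpq
  simpa using this

lemma card_sum (p q : ℝ) (hpq : p + q = 1) :
    ∑ C ∈ (univ : Finset V).powerset,
      (p ^ C.card * q ^ (Fintype.card V - C.card)) * (C.card : ℝ)
      = p * Fintype.card V := by
  have h1 : ∀ C : Finset V, C ∈ (univ : Finset V).powerset →
      (p ^ C.card * q ^ (Fintype.card V - C.card)) * (C.card : ℝ)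
      = ∑ v : V, (p ^ C.card * q ^ (Fintype.card V - C.card)) *
          (1 - if ({v} : Finset V) ∩ C = ∅ then (1:ℝ) else 0) := by
    intro C _
    rw [← Finset.mul_sum]
    congr 1
    have : ∀ v : V, (1 - if ({v} : Finset V) ∩ C = ∅ then (1:ℝ) else 0)
        = if v ∈ C then 1 else 0 := by
      intro v
      by_cases h : v ∈ C <;> simp [Finset.singleton_inter_of_mem, Finset.singleton_inter_of_notMem, h]
    rw [Finset.sum_congr rfl fun v _ => this v]
    simp [Finset.sum_ite_mem, Finset.univ_inter]
  rw [Finset.sum_congr rfl h1, Finset.sum_comm]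
  have h2 : ∀ v : V,
      ∑ C ∈ (univ : Finset V).powerset,
        (p ^ C.card * q ^ (Fintype.card V - C.card)) *
          (1 - if ({v} : Finset V) ∩ C = ∅ then (1:ℝ) else 0) = p := by
    intro v
    simp_rw [mul_sub, mul_one, Finset.sum_sub_distrib]
    rw [sum_w_one p q hpq, indep_sum _ p q hpq]
    simp; linarith
  rw [Finset.sum_congr rfl fun v _ => h2 v, Finset.sum_const, card_univ, nsmul_eq_mul, mul_comm]

variable (G : SimpleGraph V) [DecidableRel G.Adj]

def cbF (v : V) : Finset V := insert v (G.neighborFinset v)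

lemma mem_cbF {v x : V} : x ∈ cbF G v ↔ x = v ∨ G.Adj v x := by
  simp [cbF, mem_neighborFinset]

lemma coe_cbF (v : V) : (cbF G v : Set V) = insert v (G.neighborSet v) := by
  simp [cbF, neighborFinset_def, Set.coe_toFinset]

def dsetF (u v : V) : Finset V := (cbF G u \ cbF G v) ∪ (cbF G v \ cbF G u)

lemma dsetF_nonempty (hid : G.Identifiable) {u v : V} (huv : u ≠ v) :
    (dsetF G u v).Nonempty := by
  rw [Finset.nonempty_iff_ne_empty]
  intro h
  rw [dsetF, Finset.union_eq_empty, Finset.sdiff_eq_empty_iff_subset,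
    Finset.sdiff_eq_empty_iff_subset] at h
  have heq : cbF G u = cbF G v := Finset.Subset.antisymm h.1 h.2
  have hcoe : (cbF G u : Set V) = (cbF G v : Set V) := by rw [heq]
  rw [coe_cbF, coe_cbF] at hcoe
  exact huv (hid u v hcoe)

noncomputable def fixF (u v : V) : V :=
  if h : (dsetF G u v).Nonempty then h.choose else u

lemma fixF_mem {u v : V} (h : (dsetF G u v).Nonempty) : fixF G u v ∈ dsetF G u v := by
  rw [fixF, dif_pos h]; exact h.choose_spec

lemma trace_eq_iff {u v : V} (C : Finset V) :
    cbF G u ∩ C = cbF G v ∩ C ↔ dsetF G u v ∩ C = ∅ := by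
  constructor
  · intro h
    rw [Finset.eq_empty_iff_forall_notMem]
    intro x hx
    rw [Finset.mem_inter, dsetF, Finset.mem_union, Finset.mem_sdiff, Finset.mem_sdiff] at hx
    have hx' := Finset.ext_iff.mp h x
    rw [Finset.mem_inter, Finset.mem_inter] at hx'
    obtain ⟨hd, hC⟩ := hx
    rcases hd with ⟨h1, h2⟩ | ⟨h1, h2⟩
    · exact h2 (hx'.mp ⟨h1, hC⟩).1
    · exact h2 (hx'.mpr ⟨h1, hC⟩).1
  · intro h
    ext x
    rw [Finset.mem_inter, Finset.mem_inter]
    have hx := Finset.eq_empty_iff_forall_notMem.mp h x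
    rw [Finset.mem_inter, dsetF, Finset.mem_union, Finset.mem_sdiff, Finset.mem_sdiff] at hx
    constructor
    · rintro ⟨h1, hC⟩
      refine ⟨?_, hC⟩
      by_contra h2
      exact hx ⟨Or.inl ⟨h1, h2⟩, hC⟩
    · rintro ⟨h1, hC⟩
      refine ⟨?_, hC⟩
      by_contra h2
      exact hx ⟨Or.inr ⟨h1, h2⟩, hC⟩

def code1 (C : Finset V) : Finset V :=
  C ∪ univ.filter (fun v => cbF G v ∩ C = ∅)

lemma code1_dom (C : Finset V) (x : V) :
    ∃ d ∈ code1 G C, d = x ∨ G.Adj d x := by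
  by_cases h : cbF G x ∩ C = ∅
  · exact ⟨x, Finset.mem_union_right _ (mem_filter.mpr ⟨mem_univ _, h⟩), Or.inl rfl⟩
  · obtain ⟨d, hd⟩ := Finset.nonempty_iff_ne_empty.mpr h
    rw [Finset.mem_inter] at hd
    refine ⟨d, Finset.mem_union_left _ hd.2, ?_⟩
    rcases (mem_cbF G).mp hd.1 with h1 | h1
    · exact Or.inl h1
    · exact Or.inr h1.symm

noncomputable def pairs1 (e : V ≃ Fin (Fintype.card V)) (C : Finset V) : Finset (V × V) :=
  (univ ×ˢ univ).filter (fun p => (e p.1 : ℕ) < (e p.2 : ℕ) ∧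
    cbF G p.1 ∩ code1 G C = cbF G p.2 ∩ code1 G C)

noncomputable def code2 (e : V ≃ Fin (Fintype.card V)) (C : Finset V) : Finset V :=
  code1 G C ∪ (pairs1 G e C).image (fun p => fixF G p.1 p.2)

lemma code1_subset_code2 (e : V ≃ Fin (Fintype.card V)) (C : Finset V) :
    code1 G C ⊆ code2 G e C := Finset.subset_union_left

lemma code2_card (e : V ≃ Fin (Fintype.card V)) (C : Finset V) :
    (code2 G e C).card ≤ C.card + (univ.filter (fun v => cbF G v ∩ C = ∅)).card
      + (pairs1 G e C).card := by
  calc (code2 G e C).card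
      ≤ (code1 G C).card + ((pairs1 G e C).image (fun p => fixF G p.1 p.2)).card :=
        Finset.card_union_le _ _
    _ ≤ (code1 G C).card + (pairs1 G e C).card := by
        gcongr; exact Finset.card_image_le
    _ ≤ C.card + (univ.filter (fun v => cbF G v ∩ C = ∅)).card + (pairs1 G e C).card := by
        gcongr; exact Finset.card_union_le _ _

-- separation for ordered pairs
lemma sep_ordered (hid : G.Identifiable) (e : V ≃ Fin (Fintype.card V)) (C : Finset V)
    {u v : V} (hlt : (e u : ℕ) < (e v : ℕ)) :
    cbF G u ∩ code2 G e C ≠ cbF G v ∩ code2 G e C := by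
  intro heq2
  have hsub : code1 G C ⊆ code2 G e C := code1_subset_code2 G e C
  have huv : u ≠ v := by
    intro h; rw [h] at hlt; omega
  by_cases h1 : cbF G u ∩ code1 G C = cbF G v ∩ code1 G C
  · -- the fix vertex separates
    have hpmem : (u, v) ∈ pairs1 G e C := by
      rw [pairs1, mem_filter]
      exact ⟨Finset.mem_product.mpr ⟨mem_univ _, mem_univ _⟩, hlt, h1⟩
    have hfmem : fixF G u v ∈ code2 G e C :=
      Finset.mem_union_right _ (Finset.mem_image.mpr ⟨(u, v), hpmem, rfl⟩)
    have hdmem := fixF_mem G (dsetF_nonempty G hid huv)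
    rw [dsetF, Finset.mem_union, Finset.mem_sdiff, Finset.mem_sdiff] at hdmem
    have hx := Finset.ext_iff.mp heq2 (fixF G u v)
    rw [Finset.mem_inter, Finset.mem_inter] at hx
    rcases hdmem with ⟨h1', h2'⟩ | ⟨h1', h2'⟩
    · exact h2' (hx.mp ⟨h1', hfmem⟩).1
    · exact h2' (hx.mpr ⟨h1', hfmem⟩).1
  · -- monotonicity contradiction
    apply h1
    have : ∀ w : V, cbF G w ∩ code1 G C = (cbF G w ∩ code2 G e C) ∩ code1 G C := by
      intro w
      rw [Finset.inter_assoc, Finset.inter_eq_right.mpr hsub]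
    rw [this u, this v, heq2]

lemma code2_isIC (hid : G.Identifiable) (e : V ≃ Fin (Fintype.card V)) (C : Finset V) :
    G.IdentifyingCode ↑(code2 G e C) := by
  constructor
  · intro x
    obtain ⟨d, hd, hdx⟩ := code1_dom G C x
    exact ⟨d, Finset.mem_coe.mpr (code1_subset_code2 G e C hd), hdx⟩
  · intro u v huv heq
    rw [← coe_cbF, ← coe_cbF, ← Finset.coe_inter, ← Finset.coe_inter, Finset.coe_inj] at heq
    have hne : (e u : ℕ) ≠ (e v : ℕ) := by
      intro h
      exact huv (e.injective (Fin.ext h))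
    rcases hne.lt_or_gt with h | h
    · exact sep_ordered G hid e C h heq
    · exact sep_ordered G hid e C h heq.symm

lemma no_triangle' {G : SimpleGraph V} (hg : 5 ≤ G.egirth) {a b c : V} (hab : G.Adj a b)
    (hbc : G.Adj b c) (hca : G.Adj c a) : False := by
  have hcyc : (Walk.cons hab (Walk.cons hbc (Walk.cons hca Walk.nil))).IsCycle := by
    rw [Walk.isCycle_def]
    refine ⟨⟨?_⟩, by simp, ?_⟩ <;>
      simp_all [Sym2.eq_iff, hab.ne, hbc.ne, hca.ne, hab.ne', hbc.ne', hca.ne']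
  have h := SimpleGraph.le_egirth.mp hg a _ hcyc
  simp only [Walk.length_cons, Walk.length_nil] at h
  exact absurd h (by norm_num)

lemma no_square' {G : SimpleGraph V} (hg : 5 ≤ G.egirth) {a b c d : V} (hab : G.Adj a b)
    (hbc : G.Adj b c) (hcd : G.Adj c d) (hda : G.Adj d a) (hac : a ≠ c) (hbd : b ≠ d) :
    False := by
  have h1 : c ≠ a := hac.symm
  have h2 : d ≠ b := hbd.symm
  have hcyc : (Walk.cons hab (Walk.cons hbc (Walk.cons hcd (Walk.cons hda Walk.nil)))).IsCycle := by
    rw [Walk.isCycle_def]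
    refine ⟨⟨?_⟩, by simp, ?_⟩ <;>
      simp_all [Sym2.eq_iff, hab.ne, hbc.ne, hcd.ne, hda.ne, hab.ne', hbc.ne', hcd.ne', hda.ne']
  have h := SimpleGraph.le_egirth.mp hg a _ hcyc
  simp only [Walk.length_cons, Walk.length_nil] at h
  exact absurd h (by norm_num)

lemma cbF_card (hcubic : ∀ v : V, (G.neighborSet v).ncard = 3) (v : V) :
    (cbF G v).card = 4 := by
  rw [cbF, Finset.card_insert_of_notMem (by simp [mem_neighborFinset, G.irrefl])]
  have : (G.neighborFinset v).card = 3 := by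
    rw [neighborFinset_def, ← Set.ncard_eq_toFinset_card']
    exact hcubic v
  omega

lemma inter_adj (hg : 5 ≤ G.egirth) {u v : V} (huv : G.Adj u v) :
    cbF G u ∩ cbF G v = {u, v} := by
  ext x
  rw [Finset.mem_inter, mem_cbF, mem_cbF, Finset.mem_insert, Finset.mem_singleton]
  constructor
  · rintro ⟨hu | hu, hv | hv⟩
    · exact Or.inl hu
    · exact Or.inl hu
    · exact Or.inr hv
    · exact absurd (no_triangle' hg huv hv hu.symm) id
  · rintro (rfl | rfl)
    · exact ⟨Or.inl rfl, Or.inr huv.symm⟩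
    · exact ⟨Or.inr huv, Or.inl rfl⟩

lemma inter_nonadj (hg : 5 ≤ G.egirth) {u v : V} (huv : u ≠ v) (hnadj : ¬ G.Adj u v) :
    (cbF G u ∩ cbF G v).card ≤ 1 := by
  rw [Finset.card_le_one]
  intro a ha b hb
  by_contra hab
  rw [Finset.mem_inter, mem_cbF, mem_cbF] at ha hb
  have ha1 : G.Adj u a ∧ G.Adj v a := by
    rcases ha with ⟨rfl | h1, h2⟩
    · rcases h2 with rfl | h2
      · exact absurd rfl huv
      · exact absurd h2.symm hnadj
    · rcases h2 with rfl | h2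
      · exact absurd h1 hnadj
      · exact ⟨h1, h2⟩
  have hb1 : G.Adj u b ∧ G.Adj v b := by
    rcases hb with ⟨rfl | h1, h2⟩
    · rcases h2 with rfl | h2
      · exact absurd rfl huv
      · exact absurd h2.symm hnadj
    · rcases h2 with rfl | h2
      · exact absurd h1 hnadj
      · exact ⟨h1, h2⟩
  exact no_square' hg ha1.1 ha1.2.symm hb1.2 hb1.1.symm huv hab

lemma dsetF_card (u v : V) :
    (dsetF G u v).card + 2 * (cbF G u ∩ cbF G v).card = (cbF G u).card + (cbF G v).card := by
  have hdisj : Disjoint (cbF G u \ cbF G v) (cbF G v \ cbF G u) :=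
    disjoint_sdiff_sdiff
  rw [dsetF, Finset.card_union_of_disjoint hdisj]
  have h1 := Finset.card_inter_add_card_sdiff (cbF G u) (cbF G v)
  have h2 := Finset.card_inter_add_card_sdiff (cbF G v) (cbF G u)
  rw [Finset.inter_comm] at h2
  omega

noncomputable def Qset (e : V ≃ Fin (Fintype.card V)) : Finset (V × V) :=
  (univ ×ˢ univ).filter (fun p => (e p.1 : ℕ) < (e p.2 : ℕ) ∧ (cbF G p.1 ∩ cbF G p.2).Nonempty)

lemma pairs1_subset (e : V ≃ Fin (Fintype.card V)) (C : Finset V) :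
    pairs1 G e C ⊆ (Qset G e).filter (fun p => dsetF G p.1 p.2 ∩ C = ∅) := by
  intro p hp
  rw [pairs1, mem_filter] at hp
  obtain ⟨hmem, hlt, heq⟩ := hp
  rw [mem_filter, Qset, mem_filter]
  refine ⟨⟨hmem, hlt, ?_⟩, ?_⟩
  · obtain ⟨d, hd, hdx⟩ := code1_dom G C p.1
    have hd1 : d ∈ cbF G p.1 := by
      rw [mem_cbF]
      rcases hdx with h | h
      · exact Or.inl h
      · exact Or.inr h.symm
    have hd2 : d ∈ cbF G p.2 ∩ code1 G C := by
      rw [← heq, Finset.mem_inter]; exact ⟨hd1, hd⟩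
    exact ⟨d, Finset.mem_inter.mpr ⟨hd1, (Finset.mem_inter.mp hd2).1⟩⟩
  · have h0 : dsetF G p.1 p.2 ∩ code1 G C = ∅ := (trace_eq_iff G _).mp heq
    have hsub : dsetF G p.1 p.2 ∩ C ⊆ dsetF G p.1 p.2 ∩ code1 G C :=
      Finset.inter_subset_inter (Finset.Subset.refl _) Finset.subset_union_left
    rw [← Finset.subset_empty, ← h0]
    exact hsub

lemma Qa_card (hcubic : ∀ v : V, (G.neighborSet v).ncard = 3)
    (e : V ≃ Fin (Fintype.card V)) :
    2 * ((Qset G e).filter (fun p => G.Adj p.1 p.2)).card ≤ 3 * Fintype.card V := by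
  have hdeg : ∀ v : V, G.degree v = 3 := by
    intro v
    rw [degree, neighborFinset_def, ← Set.ncard_eq_toFinset_card']
    exact hcubic v
  have hsum : ∑ v : V, G.degree v = 2 * G.edgeFinset.card :=
    G.sum_degrees_eq_twice_card_edges
  have h3n : 3 * Fintype.card V = 2 * G.edgeFinset.card := by
    rw [← hsum, Finset.sum_congr rfl fun v _ => hdeg v, Finset.sum_const, card_univ,
      smul_eq_mul, mul_comm]
  rw [h3n]
  have hinj : ((Qset G e).filter (fun p => G.Adj p.1 p.2)).card ≤ G.edgeFinset.card := by
    apply Finset.card_le_card_of_injOn (fun p => s(p.1, p.2))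
    · intro p hp
      rw [Finset.mem_coe, mem_filter] at hp
      rw [Finset.mem_coe, mem_edgeFinset, mem_edgeSet]
      exact hp.2
    · intro p hp p' hp' hpp
      rw [Finset.mem_coe, mem_filter, Qset, mem_filter] at hp hp'
      have h1 := hp.1.2.1
      have h2 := hp'.1.2.1
      rw [Sym2.eq_iff] at hpp
      rcases hpp with ⟨ha, hb⟩ | ⟨ha, hb⟩
      · exact Prod.ext ha hb
      · rw [ha, hb] at h1; omega
  omega

lemma ltpairs {W : Type*} [DecidableEq W] {n : ℕ} (e : W ≃ Fin n) (s : Finset W) :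
    2 * ((s ×ˢ s).filter (fun p => (e p.1 : ℕ) < (e p.2 : ℕ))).card + s.card
      = s.card * s.card := by
  have hlt_gt : ((s ×ˢ s).filter (fun p => (e p.1 : ℕ) < (e p.2 : ℕ))).card
      = ((s ×ˢ s).filter (fun p => (e p.2 : ℕ) < (e p.1 : ℕ))).card := by
    apply Finset.card_nbij' (fun p => (p.2, p.1)) (fun p => (p.2, p.1)) <;>
      simp +contextual [Finset.mem_product, and_comm, Set.MapsTo, Set.LeftInvOn, Set.RightInvOn, Set.EqOn]
  have hdiag : ((s ×ˢ s).filter (fun p => ¬ (e p.1 : ℕ) < (e p.2 : ℕ)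
      ∧ ¬ (e p.2 : ℕ) < (e p.1 : ℕ))).card = s.card := by
    have heq : ((s ×ˢ s).filter (fun p => ¬ (e p.1 : ℕ) < (e p.2 : ℕ)
        ∧ ¬ (e p.2 : ℕ) < (e p.1 : ℕ))) = s.image (fun a => (a, a)) := by
      ext p
      rw [mem_filter, Finset.mem_product, Finset.mem_image]
      constructor
      · rintro ⟨⟨h1, h2⟩, h3, h4⟩
        have : (e p.1 : ℕ) = e p.2 := by omega
        have : p.1 = p.2 := e.injective (Fin.ext this)
        exact ⟨p.1, h1, Prod.ext rfl this⟩
      · rintro ⟨a, ha, rfl⟩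
        exact ⟨⟨ha, ha⟩, by simp, by simp⟩
    rw [heq, Finset.card_image_of_injective _ (fun a b h => (Prod.ext_iff.mp h).1)]
  have htotal := Finset.card_filter_add_card_filter_not
    (s := s ×ˢ s) (p := fun p => (e p.1 : ℕ) < (e p.2 : ℕ))
  have hsplit : ((s ×ˢ s).filter (fun p => ¬ (e p.1 : ℕ) < (e p.2 : ℕ))).card
      = ((s ×ˢ s).filter (fun p => (e p.2 : ℕ) < (e p.1 : ℕ))).card
        + ((s ×ˢ s).filter (fun p => ¬ (e p.1 : ℕ) < (e p.2 : ℕ)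
            ∧ ¬ (e p.2 : ℕ) < (e p.1 : ℕ))).card := by
    rw [← Finset.card_union_of_disjoint]
    · congr 1
      ext p
      simp only [mem_filter, Finset.mem_union]
      constructor
      · rintro ⟨h1, h2⟩
        by_cases h : (e p.2 : ℕ) < (e p.1 : ℕ)
        · exact Or.inl ⟨h1, h⟩
        · exact Or.inr ⟨h1, h2, h⟩
      · rintro (⟨h1, h2⟩ | ⟨h1, h2, h3⟩)
        · exact ⟨h1, by omega⟩
        · exact ⟨h1, h2⟩
    · rw [Finset.disjoint_filter]
      rintro p _ h1 ⟨h2, h3⟩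
      exact h3 h1
  rw [Finset.card_product] at htotal
  omega

lemma Qd_card (hcubic : ∀ v : V, (G.neighborSet v).ncard = 3)
    (e : V ≃ Fin (Fintype.card V)) :
    ((Qset G e).filter (fun p => ¬ G.Adj p.1 p.2)).card ≤ 3 * Fintype.card V := by
  -- inject into sigma over common neighbours
  have hmain : ((Qset G e).filter (fun p => ¬ G.Adj p.1 p.2)).card ≤
      (univ.sigma (fun w : V => (G.neighborFinset w ×ˢ G.neighborFinset w).filter
        (fun p => (e p.1 : ℕ) < (e p.2 : ℕ)))).card := by
    have hwit : ∀ p ∈ (Qset G e).filter (fun p => ¬ G.Adj p.1 p.2),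
        ∃ w : V, G.Adj w p.1 ∧ G.Adj w p.2 := by
      intro p hp
      rw [mem_filter, Qset, mem_filter] at hp
      obtain ⟨⟨_, hlt, ⟨x, hx⟩⟩, hnadj⟩ := hp
      have hne : p.1 ≠ p.2 := by
        intro h; rw [h] at hlt; omega
      rw [Finset.mem_inter, mem_cbF, mem_cbF] at hx
      rcases hx with ⟨rfl | h1, h2⟩
      · rcases h2 with h2 | h2
        · exact absurd h2 hne
        · exact absurd h2.symm hnadj
      · rcases h2 with rfl | h2
        · exact absurd h1 hnadj
        · exact ⟨x, h1.symm, h2.symm⟩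
    apply Finset.card_le_card_of_injOn
      (fun p => (⟨if h : ∃ w : V, G.Adj w p.1 ∧ G.Adj w p.2 then h.choose else p.1, p⟩ :
        (_ : V) × (V × V)))
    · intro p hp
      have hw := hwit p hp
      rw [Finset.mem_coe, Finset.mem_sigma]
      constructor
      · exact mem_univ _
      · beta_reduce
        rw [dif_pos hw]
        obtain ⟨h1, h2⟩ := hw.choose_spec
        rw [mem_filter, Finset.mem_product, mem_neighborFinset, mem_neighborFinset]
        rw [Finset.mem_coe, mem_filter, Qset, mem_filter] at hp
        exact ⟨⟨h1, h2⟩, hp.1.2.1⟩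
    · intro p _ p' _ h
      have := congrArg Sigma.snd h
      exact this
  refine hmain.trans ?_
  rw [Finset.card_sigma]
  have hperw : ∀ w : V, ((G.neighborFinset w ×ˢ G.neighborFinset w).filter
      (fun p => (e p.1 : ℕ) < (e p.2 : ℕ))).card = 3 := by
    intro w
    have hdeg : (G.neighborFinset w).card = 3 := by
      rw [neighborFinset_def, ← Set.ncard_eq_toFinset_card']
      exact hcubic w
    have := ltpairs e (G.neighborFinset w)
    rw [hdeg] at this
    omega
  rw [Finset.sum_congr rfl fun w _ => hperw w, Finset.sum_const, card_univ, smul_eq_mul,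
    mul_comm]


noncomputable def tgtf (e : V ≃ Fin (Fintype.card V)) (C : Finset V) : ℝ :=
  (C.card : ℝ) + ((univ.filter (fun v => cbF G v ∩ C = ∅)).card : ℝ) + ((pairs1 G e C).card : ℝ)

lemma exists_good_C (hcubic : ∀ v : V, (G.neighborSet v).ncard = 3) (hg : 5 ≤ G.egirth)
    (e : V ≃ Fin (Fintype.card V)) :
    ∃ C : Finset V, ((code2 G e C).card : ℝ) ≤ 31 / 45 * Fintype.card V := by
  have hpq : (3/5 : ℝ) + 2/5 = 1 := by norm_num
  have hwpos : ∀ C : Finset V,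
      0 < (3/5 : ℝ) ^ C.card * (2/5 : ℝ) ^ (Fintype.card V - C.card) := by
    intro C
    positivity
  -- expectation of the target
  have hterm1 : ∑ C ∈ (univ : Finset V).powerset,
      ((3/5 : ℝ) ^ C.card * (2/5 : ℝ) ^ (Fintype.card V - C.card)) * (C.card : ℝ)
      = 3/5 * Fintype.card V :=
    card_sum (3/5) (2/5) hpq
  have hterm2 : ∑ C ∈ (univ : Finset V).powerset,
      ((3/5 : ℝ) ^ C.card * (2/5 : ℝ) ^ (Fintype.card V - C.card)) *
        ((univ.filter (fun v => cbF G v ∩ C = ∅)).card : ℝ)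
      = (Fintype.card V : ℝ) * (2/5 : ℝ) ^ 4 := by
    have h1 : ∀ C : Finset V, ((univ.filter (fun v => cbF G v ∩ C = ∅)).card : ℝ)
        = ∑ v : V, (if cbF G v ∩ C = ∅ then (1:ℝ) else 0) := by
      intro C
      rw [Finset.card_filter]
      push_cast
      exact Finset.sum_congr rfl fun v _ => by split <;> norm_num
    simp_rw [h1, Finset.mul_sum]
    rw [Finset.sum_comm]
    have h2 : ∀ v : V, ∑ C ∈ (univ : Finset V).powerset,
        ((3/5 : ℝ) ^ C.card * (2/5 : ℝ) ^ (Fintype.card V - C.card)) *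
          (if cbF G v ∩ C = ∅ then (1:ℝ) else 0) = (2/5 : ℝ) ^ 4 := by
      intro v
      rw [show ((2/5 : ℝ)) ^ 4 = (2/5 : ℝ) ^ (cbF G v).card by rw [cbF_card G hcubic v]]
      exact indep_sum (cbF G v) (3/5) (2/5) hpq
    rw [Finset.sum_congr rfl fun v _ => h2 v, Finset.sum_const, card_univ, nsmul_eq_mul]
  have hterm3 : ∑ C ∈ (univ : Finset V).powerset,
      ((3/5 : ℝ) ^ C.card * (2/5 : ℝ) ^ (Fintype.card V - C.card)) * ((pairs1 G e C).card : ℝ)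
      ≤ ((((Qset G e).filter (fun r => G.Adj r.1 r.2)).card : ℝ) * (2/5 : ℝ) ^ 4
        + (((Qset G e).filter (fun r => ¬ G.Adj r.1 r.2)).card : ℝ) * (2/5 : ℝ) ^ 6) := by
    calc ∑ C ∈ (univ : Finset V).powerset,
        ((3/5 : ℝ) ^ C.card * (2/5 : ℝ) ^ (Fintype.card V - C.card)) * ((pairs1 G e C).card : ℝ)
        ≤ ∑ C ∈ (univ : Finset V).powerset,
          ((3/5 : ℝ) ^ C.card * (2/5 : ℝ) ^ (Fintype.card V - C.card)) *
            ((((Qset G e).filter (fun r => dsetF G r.1 r.2 ∩ C = ∅)).card : ℝ)) := by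
          apply Finset.sum_le_sum
          intro C _
          have := Finset.card_le_card (pairs1_subset G e C)
          exact mul_le_mul_of_nonneg_left (by exact_mod_cast this) (hwpos C).le
      _ = ∑ r ∈ Qset G e, (2/5 : ℝ) ^ (dsetF G r.1 r.2).card := by
          have h1 : ∀ C : Finset V,
              ((((Qset G e).filter (fun r => dsetF G r.1 r.2 ∩ C = ∅)).card : ℝ))
              = ∑ r ∈ Qset G e, (if dsetF G r.1 r.2 ∩ C = ∅ then (1:ℝ) else 0) := by
            intro C
            rw [Finset.card_filter]
            push_cast
            exact Finset.sum_congr rfl fun r _ => by split <;> norm_num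
          simp_rw [h1, Finset.mul_sum]
          rw [Finset.sum_comm]
          exact Finset.sum_congr rfl fun r _ => indep_sum (dsetF G r.1 r.2) (3/5) (2/5) hpq
      _ ≤ _ := by
          rw [← Finset.sum_filter_add_sum_filter_not (Qset G e) (fun r => G.Adj r.1 r.2)]
          have hA : ∑ r ∈ (Qset G e).filter (fun r => G.Adj r.1 r.2),
              (2/5 : ℝ) ^ (dsetF G r.1 r.2).card
              ≤ (((Qset G e).filter (fun r => G.Adj r.1 r.2)).card : ℝ) * (2/5 : ℝ) ^ 4 := by
            rw [← nsmul_eq_mul]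
            apply Finset.sum_le_card_nsmul
            intro r hr
            rw [mem_filter] at hr
            have hd : (dsetF G r.1 r.2).card = 4 := by
              have hi := inter_adj G hg hr.2
              have hne : r.1 ≠ r.2 := hr.2.ne
              have hic : (cbF G r.1 ∩ cbF G r.2).card = 2 := by
                rw [hi, Finset.card_insert_of_notMem (by simpa using hne),
                  Finset.card_singleton]
              have hds := dsetF_card G r.1 r.2
              rw [hic, cbF_card G hcubic, cbF_card G hcubic] at hds
              omega
            rw [hd]
          have hB : ∑ r ∈ (Qset G e).filter (fun r => ¬ G.Adj r.1 r.2),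
              (2/5 : ℝ) ^ (dsetF G r.1 r.2).card
              ≤ (((Qset G e).filter (fun r => ¬ G.Adj r.1 r.2)).card : ℝ) * (2/5 : ℝ) ^ 6 := by
            rw [← nsmul_eq_mul]
            apply Finset.sum_le_card_nsmul
            intro r hr
            rw [mem_filter, Qset, mem_filter] at hr
            have hne : r.1 ≠ r.2 := by
              intro h
              have := hr.1.2.1
              rw [h] at this
              omega
            have hile := inter_nonadj G hg hne hr.2
            have hds := dsetF_card G r.1 r.2
            rw [cbF_card G hcubic, cbF_card G hcubic] at hds
            have h6 : 6 ≤ (dsetF G r.1 r.2).card := by omega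
            exact pow_le_pow_of_le_one (by norm_num) (by norm_num) h6
          linarith
  have hQa := Qa_card G hcubic e
  have hQd := Qd_card G hcubic e
  have hE : ∑ C ∈ (univ : Finset V).powerset,
      ((3/5 : ℝ) ^ C.card * (2/5 : ℝ) ^ (Fintype.card V - C.card)) * tgtf G e C
      ≤ 31 / 45 * Fintype.card V := by
    have hsplit : ∑ C ∈ (univ : Finset V).powerset,
        ((3/5 : ℝ) ^ C.card * (2/5 : ℝ) ^ (Fintype.card V - C.card)) * tgtf G e C
        = ∑ C ∈ (univ : Finset V).powerset,
            ((3/5 : ℝ) ^ C.card * (2/5 : ℝ) ^ (Fintype.card V - C.card)) * (C.card : ℝ)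
          + ∑ C ∈ (univ : Finset V).powerset,
              ((3/5 : ℝ) ^ C.card * (2/5 : ℝ) ^ (Fintype.card V - C.card)) *
                ((univ.filter (fun v => cbF G v ∩ C = ∅)).card : ℝ)
          + ∑ C ∈ (univ : Finset V).powerset,
              ((3/5 : ℝ) ^ C.card * (2/5 : ℝ) ^ (Fintype.card V - C.card)) *
                ((pairs1 G e C).card : ℝ) := by
      rw [← Finset.sum_add_distrib, ← Finset.sum_add_distrib]
      exact Finset.sum_congr rfl fun C _ => by rw [tgtf]; ring
    rw [hsplit, hterm1, hterm2]
    have hQaR : (((Qset G e).filter (fun r => G.Adj r.1 r.2)).card : ℝ)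
        ≤ 3 / 2 * Fintype.card V := by
      have h2 : ((2 : ℝ)) * (((Qset G e).filter (fun r => G.Adj r.1 r.2)).card : ℝ)
          ≤ 3 * Fintype.card V := by exact_mod_cast hQa
      linarith
    have hQdR : (((Qset G e).filter (fun r => ¬ G.Adj r.1 r.2)).card : ℝ)
        ≤ 3 * Fintype.card V := by exact_mod_cast hQd
    have hq4 : (0:ℝ) < (2/5 : ℝ) ^ 4 := by positivity
    have hq6 : (0:ℝ) < (2/5 : ℝ) ^ 6 := by positivity
    nlinarith [hterm3, mul_le_mul_of_nonneg_right hQaR hq4.le,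
      mul_le_mul_of_nonneg_right hQdR hq6.le]
  have hex : ∃ C ∈ (univ : Finset V).powerset, tgtf G e C ≤ 31 / 45 * Fintype.card V := by
    by_contra hcon
    push_neg at hcon
    have hlt : ∑ C ∈ (univ : Finset V).powerset,
        ((3/5 : ℝ) ^ C.card * (2/5 : ℝ) ^ (Fintype.card V - C.card)) *
          (31 / 45 * Fintype.card V)
        < ∑ C ∈ (univ : Finset V).powerset,
          ((3/5 : ℝ) ^ C.card * (2/5 : ℝ) ^ (Fintype.card V - C.card)) * tgtf G e C := by
      apply Finset.sum_lt_sum_of_nonempty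
      · exact ⟨∅, Finset.mem_powerset.mpr (Finset.empty_subset _)⟩
      · intro C hC
        exact mul_lt_mul_of_pos_left (hcon C hC) (hwpos C)
    rw [← Finset.sum_mul, sum_w_one (3/5) (2/5) hpq, one_mul] at hlt
    linarith
  obtain ⟨C, _, hC⟩ := hex
  refine ⟨C, ?_⟩
  have hcard := code2_card G e C
  calc ((code2 G e C).card : ℝ) ≤ tgtf G e C := by
        rw [tgtf]
        exact_mod_cast hcard
    _ ≤ 31 / 45 * Fintype.card V := hC


end Aux

/-- Corollary: every connected cubic identifiable graph of order `n` and girth at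
least 5 has identifying code number at most `(31/45)·n`. -/
theorem gammaID_le_of_connected_cubic
    {V : Type*} [Fintype V] (G : SimpleGraph V) (hconn : G.Connected)
    (hcubic : ∀ v : V, (G.neighborSet v).ncard = 3) (hid : G.Identifiable)
    (hg : 5 ≤ G.egirth) :
    (G.gammaID : ℝ) ≤ 31 / 45 * Fintype.card V := by
  letI : DecidableEq V := Classical.decEq V
  letI : DecidableRel G.Adj := fun a b => Classical.propDecidable _
  obtain ⟨C, hC⟩ := exists_good_C G hcubic hg (Fintype.equivFin V)
  have hIC := code2_isIC G hid (Fintype.equivFin V) C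
  have hmem : (code2 G (Fintype.equivFin V) C).card ∈
      {k : ℕ | ∃ D : Set V, G.IdentifyingCode D ∧ D.ncard = k} :=
    ⟨↑(code2 G (Fintype.equivFin V) C), hIC, Set.ncard_coe_finset _⟩
  have hle : G.gammaID ≤ (code2 G (Fintype.equivFin V) C).card := Nat.sInf_le hmem
  calc (G.gammaID : ℝ) ≤ ((code2 G (Fintype.equivFin V) C).card : ℝ) := by exact_mod_cast hle
    _ ≤ 31 / 45 * Fintype.card V := hC
end

section
/- For every integer k ≥ 3 there exists a connected finite simple graph G of order n = 11k + 1, with girth at least 5, minimum degree at least 3, and location-domination number γLD(G) = 4k = (4/11)·(n − 1). (In particular, there are infinitely many connected graphs of girth at least 5 and minimum degree at least 3 attaining γLD(G) = (4/11)·(n − 1).) -/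
/-- A set `C` is *locating-dominating* if it is dominating and every two distinct
vertices outside `C` have different neighbourhoods within `C`. -/
def SimpleGraph.LocatingDominatingSet {V : Type*} (G : SimpleGraph V) (C : Set V) : Prop :=
  G.DominatingSet C ∧
    ∀ u ∉ C, ∀ v ∉ C, u ≠ v → G.neighborSet u ∩ C ≠ G.neighborSet v ∩ C

/-- The location-domination number: the minimum size of a locating-dominating set. -/
noncomputable def SimpleGraph.gammaLD {V : Type*} (G : SimpleGraph V) : ℕ :=
  sInf {k : ℕ | ∃ C : Set V, G.LocatingDominatingSet C ∧ C.ncard = k}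

/-! ### The subdivided Petersen graph `P11` -/

/-- Adjacency of `P11`: vertices `0..4` are the outer cycle, `5..9` the inner
pentagram, `10` is the subdivision vertex `x` on the edge `0–1`. -/
def padjB : Fin 11 → Fin 11 → Bool := fun a b =>
  ([(0,10),(10,1),(1,2),(2,3),(3,4),(4,0),(0,5),(1,6),(2,7),(3,8),(4,9),
    (5,7),(7,9),(9,6),(6,8),(8,5)] : List (Fin 11 × Fin 11)).any
    (fun p => (p.1 == a && p.2 == b) || (p.1 == b && p.2 == a))

/-- The locating-dominating code inside one copy of `P11`. -/
def SB : Fin 11 → Bool := fun a => a == 2 || a == 8 || a == 9 || a == 10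

theorem padj_symm : ∀ a b, padjB a b = padjB b a := by decide
theorem padj_irrefl : ∀ a, padjB a a = false := by decide
theorem p11_no_tri : ∀ a b c : Fin 11, padjB a b → padjB b c → padjB a c → False := by decide
theorem p11_no_c4 : ∀ a b s t : Fin 11, a ≠ b → s ≠ t →
    padjB a s → padjB a t → padjB b s → padjB b t → False := by decide
theorem S_dom : ∀ a : Fin 11, SB a = false → ∃ s, SB s ∧ padjB a s := by decide
theorem S_loc : ∀ a b : Fin 11, SB a = false → SB b = false → a ≠ b →
    ∃ s, SB s ∧ padjB a s ≠ padjB b s := by decide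
theorem padj_deg : ∀ a : Fin 11, a ≠ 10 → ∃ b c d : Fin 11,
    b ≠ c ∧ b ≠ d ∧ c ≠ d ∧ padjB a b ∧ padjB a c ∧ padjB a d := by decide
theorem SB10 : SB 10 = true := by decide

/-! ### The graph `G₁₁ᵏ` -/

/-- Vertex type: `none` is the hub `y`, `some (i, a)` is vertex `a` of copy `i`. -/
abbrev Vk (k : ℕ) := Option (Fin k × Fin 11)

def gadj (k : ℕ) : Vk k → Vk k → Prop := fun u v =>
  match u, v with
  | some (i, a), some (j, b) => i = j ∧ padjB a b = true
  | some (_, a), none => a = 10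
  | none, some (_, b) => b = 10
  | none, none => False

def Gk (k : ℕ) : SimpleGraph (Vk k) where
  Adj := gadj k
  symm := by
    constructor
    rintro (_ | ⟨i, a⟩) (_ | ⟨j, b⟩) h <;> simp only [gadj] at h ⊢
    · exact h
    · exact h
    · exact ⟨h.1.symm, by rw [padj_symm]; exact h.2⟩
  loopless := by
    constructor
    rintro (_ | ⟨i, a⟩) h <;> simp only [gadj] at h
    · simp [padj_irrefl] at h

lemma adj_ss {k : ℕ} {i j : Fin k} {a b : Fin 11} :
    (Gk k).Adj (some (i, a)) (some (j, b)) ↔ i = j ∧ padjB a b = true := Iff.rfl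
lemma adj_ns {k : ℕ} {j : Fin k} {b : Fin 11} :
    (Gk k).Adj none (some (j, b)) ↔ b = 10 := Iff.rfl
lemma adj_sn {k : ℕ} {i : Fin k} {a : Fin 11} :
    (Gk k).Adj (some (i, a)) none ↔ a = 10 := Iff.rfl
lemma adj_nn {k : ℕ} : ¬ (Gk k).Adj none none := id

lemma step {k : ℕ} (i : Fin k) {a b : Fin 11} (h : padjB a b = true) :
    (Gk k).Adj (some (i, a)) (some (i, b)) := ⟨rfl, h⟩

lemma reach_some {k : ℕ} (i : Fin k) (a : Fin 11) :
    (Gk k).Reachable (some (i, 10)) (some (i, a)) := by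
  have r0 : (Gk k).Reachable (some (i, 10)) (some (i, 0)) :=
    (step i (by decide)).reachable
  have r1 : (Gk k).Reachable (some (i, 10)) (some (i, 1)) :=
    (step i (by decide)).reachable
  have r2 : (Gk k).Reachable (some (i, 10)) (some (i, 2)) :=
    r1.trans (step i (by decide : padjB 1 2 = true)).reachable
  have r3 : (Gk k).Reachable (some (i, 10)) (some (i, 3)) :=
    r2.trans (step i (by decide : padjB 2 3 = true)).reachable
  have r4 : (Gk k).Reachable (some (i, 10)) (some (i, 4)) :=
    r3.trans (step i (by decide : padjB 3 4 = true)).reachable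
  have r5 : (Gk k).Reachable (some (i, 10)) (some (i, 5)) :=
    r0.trans (step i (by decide : padjB 0 5 = true)).reachable
  have r6 : (Gk k).Reachable (some (i, 10)) (some (i, 6)) :=
    r1.trans (step i (by decide : padjB 1 6 = true)).reachable
  have r7 : (Gk k).Reachable (some (i, 10)) (some (i, 7)) :=
    r2.trans (step i (by decide : padjB 2 7 = true)).reachable
  have r8 : (Gk k).Reachable (some (i, 10)) (some (i, 8)) :=
    r3.trans (step i (by decide : padjB 3 8 = true)).reachable
  have r9 : (Gk k).Reachable (some (i, 10)) (some (i, 9)) :=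
    r4.trans (step i (by decide : padjB 4 9 = true)).reachable
  fin_cases a <;> first
    | exact SimpleGraph.Reachable.refl _
    | exact r0 | exact r1 | exact r2 | exact r3 | exact r4
    | exact r5 | exact r6 | exact r7 | exact r8 | exact r9

lemma reach_none {k : ℕ} (v : Vk k) : (Gk k).Reachable v none := by
  match v with
  | none => exact SimpleGraph.Reachable.refl _
  | some (i, a) =>
      exact ((reach_some i a).symm).trans
        (SimpleGraph.Adj.reachable (show (Gk k).Adj (some (i, 10)) none from rfl))

lemma Gk_connected (k : ℕ) : (Gk k).Connected := by
  rw [SimpleGraph.connected_iff]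
  exact ⟨fun u v => (reach_none u).trans (reach_none v).symm, ⟨none⟩⟩

lemma g_no_tri {k : ℕ} : ∀ u v w : Vk k,
    (Gk k).Adj u v → (Gk k).Adj v w → (Gk k).Adj u w → False := by
  rintro (_ | ⟨i, a⟩) (_ | ⟨j, b⟩) (_ | ⟨l, c⟩) h1 h2 h3
  · exact h1
  · exact h1
  · exact h3
  · obtain ⟨hjl, hbc⟩ := h2
    rw [adj_ns] at h1 h3; subst h1; subst h3
    simp [padj_irrefl] at hbc
  · exact h2
  · obtain ⟨hil, hac⟩ := h3
    rw [adj_sn] at h1; rw [adj_ns] at h2; subst h1; subst h2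
    simp [padj_irrefl] at hac
  · obtain ⟨hij, hab⟩ := h1
    rw [adj_sn] at h2 h3; subst h2; subst h3
    simp [padj_irrefl] at hab
  · obtain ⟨hij, hab⟩ := h1
    obtain ⟨hjl, hbc⟩ := h2
    obtain ⟨hil, hac⟩ := h3
    exact p11_no_tri a b c hab hbc hac

lemma g_no_c4 {k : ℕ} : ∀ u v w x : Vk k, u ≠ w → v ≠ x →
    (Gk k).Adj u v → (Gk k).Adj v w → (Gk k).Adj w x → (Gk k).Adj x u → False := by
  rintro (_ | ⟨i, a⟩) (_ | ⟨j, b⟩) (_ | ⟨l, c⟩) (_ | ⟨m, d⟩) huw hvx h1 h2 h3 h4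
  all_goals first
    | exact h1 | exact h2 | exact h3 | exact h4
    | (exact huw rfl) | (exact hvx rfl)
    | skip
  -- remaining cases: at most one `none`
  · -- u = none, others some
    rw [adj_ns] at h1; rw [adj_sn] at h4
    obtain ⟨hjl, hbc⟩ := h2
    obtain ⟨hlm, hcd⟩ := h3
    subst h1; subst h4; subst hjl; subst hlm
    exact hvx rfl
  · -- v = none
    rw [adj_sn] at h1; rw [adj_ns] at h2
    obtain ⟨hlm, hcd⟩ := h3
    obtain ⟨hmi, hda⟩ := h4
    subst h1; subst h2; subst hlm; subst hmi
    exact huw rfl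
  · -- w = none
    obtain ⟨hij, hab⟩ := h1
    rw [adj_sn] at h2; rw [adj_ns] at h3
    obtain ⟨hmi, hda⟩ := h4
    subst h2; subst h3; subst hij; subst hmi
    exact hvx rfl
  · -- x = none
    obtain ⟨hij, hab⟩ := h1
    obtain ⟨hjl, hbc⟩ := h2
    rw [adj_sn] at h3; rw [adj_ns] at h4
    subst h3; subst h4; subst hij; subst hjl
    exact huw rfl
  · -- all some
    obtain ⟨hij, hab⟩ := h1
    obtain ⟨hjl, hbc⟩ := h2
    obtain ⟨hlm, hcd⟩ := h3
    obtain ⟨hmi, hda⟩ := h4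
    subst hij; subst hjl; subst hlm
    have hac : a ≠ c := by
      intro h; subst h; exact huw rfl
    have hbd : b ≠ d := by
      intro h; subst h; exact hvx rfl
    exact p11_no_c4 b d a c hbd hac (by rw [padj_symm]; exact hab) hbc
      hda (by rw [padj_symm]; exact hcd)

lemma cycles_long {k : ℕ} : ∀ (a : Vk k) (w : (Gk k).Walk a a), w.IsCycle → 5 ≤ w.length := by
  intro a w hw
  by_contra hlen
  push_neg at hlen
  have h3 := hw.three_le_length
  cases w with
  | nil => simp at h3
  | cons h1 w1 =>
    cases w1 with
    | nil => simp at h3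
    | cons h2 w2 =>
      cases w2 with
      | nil => simp at h3
      | cons h3' w3 =>
        cases w3 with
        | nil => exact g_no_tri _ _ _ h1 h2 (h3'.symm)
        | cons h4 w4 =>
          cases w4 with
          | nil =>
            have hnd := hw.2
            simp [SimpleGraph.Walk.support_cons, List.nodup_cons] at hnd
            exact g_no_c4 _ _ _ _ (by tauto) (by tauto) h1 h2 h3' h4
          | cons h5 w5 =>
            simp [SimpleGraph.Walk.length_cons] at hlen
            omega

lemma Gk_egirth {k : ℕ} : 5 ≤ (Gk k).egirth := by
  rw [SimpleGraph.le_egirth]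
  intro a w hw
  have := cycles_long a w hw
  exact_mod_cast this


/-! ### The explicit locating-dominating set -/

def Sfin : Finset (Fin 11) := Finset.univ.filter (fun a => SB a = true)

def Cfin (k : ℕ) : Finset (Vk k) :=
  (Finset.univ ×ˢ Sfin).image (fun p : Fin k × Fin 11 => (some p : Vk k))

lemma mem_Cfin {k : ℕ} {i : Fin k} {a : Fin 11} :
    (some (i, a) : Vk k) ∈ Cfin k ↔ SB a = true := by
  simp [Cfin, Sfin]

lemma none_not_mem_Cfin {k : ℕ} : (none : Vk k) ∉ Cfin k := by
  simp [Cfin]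

lemma card_Cfin (k : ℕ) : (Cfin k).card = 4 * k := by
  rw [Cfin, Finset.card_image_of_injective _ (Option.some_injective _),
    Finset.card_product, Finset.card_univ, Fintype.card_fin]
  have h4 : Sfin.card = 4 := by decide
  rw [h4, Nat.mul_comm]

lemma exists_ne_index {k : ℕ} (hk : 3 ≤ k) (i : Fin k) : ∃ j : Fin k, j ≠ i := by
  by_cases h : i = ⟨0, by omega⟩
  · exact ⟨⟨1, by omega⟩, by simp [h, Fin.ext_iff]⟩
  · exact ⟨⟨0, by omega⟩, fun hji => h hji.symm⟩

lemma upper_LD {k : ℕ} (hk : 3 ≤ k) : (Gk k).LocatingDominatingSet ↑(Cfin k) := by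
  constructor
  · rintro (_ | ⟨i, a⟩)
    · refine ⟨some (⟨0, by omega⟩, 10), ?_, Or.inr ?_⟩
      · exact Finset.mem_coe.mpr (mem_Cfin.mpr SB10)
      · exact (adj_ns.mpr rfl).symm
    · by_cases h : SB a = true
      · exact ⟨some (i, a), Finset.mem_coe.mpr (mem_Cfin.mpr h), Or.inl rfl⟩
      · obtain ⟨s, hs, hadj⟩ := S_dom a (by simpa using h)
        exact ⟨some (i, s), Finset.mem_coe.mpr (mem_Cfin.mpr hs),
          Or.inr ⟨rfl, by rw [padj_symm]; exact hadj⟩⟩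
  · rintro (_ | ⟨i, a⟩) hu (_ | ⟨j, b⟩) hv huv heq
    · exact huv rfl
    · -- u = none, v = some (j,b)
      obtain ⟨l, hl⟩ := exists_ne_index hk j
      have hmem : (some (l, 10) : Vk k) ∈ (Gk k).neighborSet none ∩ ↑(Cfin k) :=
        ⟨show (Gk k).Adj none (some (l, 10)) from rfl, Finset.mem_coe.mpr (mem_Cfin.mpr SB10)⟩
      rw [heq] at hmem
      exact hl ((adj_ss.mp hmem.1).1.symm)
    · -- u = some (i,a), v = none
      obtain ⟨l, hl⟩ := exists_ne_index hk i
      have hmem : (some (l, 10) : Vk k) ∈ (Gk k).neighborSet none ∩ ↑(Cfin k) :=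
        ⟨show (Gk k).Adj none (some (l, 10)) from rfl, Finset.mem_coe.mpr (mem_Cfin.mpr SB10)⟩
      rw [← heq] at hmem
      exact hl ((adj_ss.mp hmem.1).1.symm)
    · -- both some
      have ha : SB a = false := by
        have := fun h => hu (Finset.mem_coe.mpr (mem_Cfin.mpr h))
        simpa using this
      have hb : SB b = false := by
        have := fun h => hv (Finset.mem_coe.mpr (mem_Cfin.mpr h))
        simpa using this
      by_cases hij : i = j
      · subst hij
        have hab : a ≠ b := by
          intro h; subst h; exact huv rfl
        obtain ⟨s, hs, hne⟩ := S_loc a b ha hb hab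
        have h1 : (some (i, s) : Vk k) ∈ (Gk k).neighborSet (some (i, a)) ∩ ↑(Cfin k) ↔
            padjB a s = true := by
          simp [SimpleGraph.mem_neighborSet, adj_ss, Finset.mem_coe, mem_Cfin, hs]
        have h2 : (some (i, s) : Vk k) ∈ (Gk k).neighborSet (some (i, b)) ∩ ↑(Cfin k) ↔
            padjB b s = true := by
          simp [SimpleGraph.mem_neighborSet, adj_ss, Finset.mem_coe, mem_Cfin, hs]
        rw [heq, h2] at h1
        cases hA : padjB a s <;> cases hB : padjB b s <;> simp_all
      · obtain ⟨s, hs, hadj⟩ := S_dom a ha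
        have hmem : (some (i, s) : Vk k) ∈ (Gk k).neighborSet (some (i, a)) ∩ ↑(Cfin k) :=
          ⟨⟨rfl, hadj⟩, Finset.mem_coe.mpr (mem_Cfin.mpr hs)⟩
        rw [heq] at hmem
        exact hij ((adj_ss.mp hmem.1).1).symm

/-! ### Lower bound -/

open Classical in
lemma copy_bound {k : ℕ} {C : Set (Vk k)} (hC : (Gk k).LocatingDominatingSet C) (i : Fin k) :
    4 ≤ {a : Fin 11 | some (i, a) ∈ C}.ncard := by
  classical
  by_contra hlt
  push_neg at hlt
  set T : Set (Fin 11) := {a | some (i, a) ∈ C} with hT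
  set Tf : Finset (Fin 11) := (Set.toFinite T).toFinset with hTfdef
  have hmemTf : ∀ a : Fin 11, a ∈ Tf ↔ some (i, a) ∈ C := by
    intro a; rw [hTfdef, Set.Finite.mem_toFinset]; rfl
  have hTcard : Tf.card ≤ 3 := by
    have h := Set.ncard_eq_toFinset_card T (Set.toFinite T)
    rw [← hTfdef] at h
    omega
  set φ : Fin 11 → Finset (Fin 11) := fun a => Tf.filter (fun s => padjB a s = true) with hφdef
  set Wf : Finset (Fin 11) := Finset.univ.filter (fun a => a ∉ Tf ∧ a ≠ 10) with hWfdef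
  -- each vertex outside the code is dominated from within its copy
  have hne : ∀ a ∈ Wf, (φ a).Nonempty := by
    intro a ha
    rw [hWfdef, Finset.mem_filter] at ha
    obtain ⟨-, haT, ha10⟩ := ha
    obtain ⟨d, hdC, hd⟩ := hC.1 (some (i, a))
    rcases hd with rfl | hadj
    · exact absurd ((hmemTf a).mpr hdC) haT
    · match d, hadj with
      | none, hadj => exact absurd (adj_ns.mp hadj) ha10
      | some (j, s), hadj =>
        obtain ⟨rfl, hsa⟩ := hadj
        exact ⟨s, Finset.mem_filter.mpr ⟨(hmemTf s).mpr hdC, by rw [padj_symm]; exact hsa⟩⟩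
  -- equal codes give equal traces
  have htrace : ∀ a b : Fin 11, a ≠ 10 → b ≠ 10 → φ a = φ b →
      (Gk k).neighborSet (some (i, a)) ∩ C = (Gk k).neighborSet (some (i, b)) ∩ C := by
    intro a b ha10 hb10 hab
    have key : ∀ s : Fin 11, (padjB a s = true ∧ some (i, s) ∈ C) ↔
        (padjB b s = true ∧ some (i, s) ∈ C) := by
      intro s
      constructor
      · rintro ⟨h1, h2⟩
        have : s ∈ φ a := Finset.mem_filter.mpr ⟨(hmemTf s).mpr h2, h1⟩
        rw [hab] at this
        exact ⟨(Finset.mem_filter.mp this).2, h2⟩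
      · rintro ⟨h1, h2⟩
        have : s ∈ φ b := Finset.mem_filter.mpr ⟨(hmemTf s).mpr h2, h1⟩
        rw [← hab] at this
        exact ⟨(Finset.mem_filter.mp this).2, h2⟩
    ext x
    match x with
    | none =>
      simp only [Set.mem_inter_iff, SimpleGraph.mem_neighborSet, adj_sn]
      exact ⟨fun h => absurd h.1 ha10, fun h => absurd h.1 hb10⟩
    | some (j, s) =>
      simp only [Set.mem_inter_iff, SimpleGraph.mem_neighborSet, adj_ss]
      constructor
      · rintro ⟨⟨rfl, h1⟩, h2⟩
        exact ⟨⟨rfl, ((key s).mp ⟨h1, h2⟩).1⟩, h2⟩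
      · rintro ⟨⟨rfl, h1⟩, h2⟩
        exact ⟨⟨rfl, ((key s).mpr ⟨h1, h2⟩).1⟩, h2⟩
  -- the code map is injective on Wf
  have hinj : ∀ a ∈ Wf, ∀ b ∈ Wf, φ a = φ b → a = b := by
    intro a ha b hb hab
    by_contra hne'
    rw [hWfdef, Finset.mem_filter] at ha hb
    have haC : some (i, a) ∉ C := fun h => ha.2.1 ((hmemTf a).mpr h)
    have hbC : some (i, b) ∉ C := fun h => hb.2.1 ((hmemTf b).mpr h)
    have hvne : (some (i, a) : Vk k) ≠ some (i, b) := by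
      intro h
      injection h with h'
      exact hne' (congrArg Prod.snd h')
    exact hC.2 _ haC _ hbC hvne (htrace a b ha.2.2 hb.2.2 hab)
  -- encode each outside vertex by the min/max of its trace
  set code : Fin 11 → Sym2 (Fin 11) := fun a =>
    if h : (φ a).Nonempty then s((φ a).min' h, (φ a).max' h) else s(0, 0) with hcodedef
  have hcodeinj : ∀ a ∈ Wf, ∀ b ∈ Wf, code a = code b → a = b := by
    intro a ha b hb hab
    rw [hcodedef] at hab
    simp only [dif_pos (hne a ha), dif_pos (hne b hb)] at hab
    set ma := (φ a).min' (hne a ha)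
    set Ma := (φ a).max' (hne a ha)
    set mb := (φ b).min' (hne b hb)
    set Mb := (φ b).max' (hne b hb)
    have hmMa : ma ≤ Ma := (φ a).min'_le _ ((φ a).max'_mem _)
    have hmMb : mb ≤ Mb := (φ b).min'_le _ ((φ b).max'_mem _)
    have heq2 : ma = mb ∧ Ma = Mb := by
      rcases Sym2.eq_iff.mp hab with ⟨h1, h2⟩ | ⟨h1, h2⟩
      · exact ⟨h1, h2⟩
      · constructor <;> [skip; skip] <;> omega
    obtain ⟨hm, hM⟩ := heq2
    by_cases hsingle : ma = Ma
    · -- both traces are singletons {ma}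
      have hfa : φ a = {ma} := by
        apply Finset.eq_singleton_iff_unique_mem.mpr
        refine ⟨(φ a).min'_mem _, fun x hx => le_antisymm ?_ ?_⟩
        · rw [hsingle]; exact (φ a).le_max' x hx
        · exact (φ a).min'_le x hx
      have hfb : φ b = {mb} := by
        apply Finset.eq_singleton_iff_unique_mem.mpr
        refine ⟨(φ b).min'_mem _, fun x hx => le_antisymm ?_ ?_⟩
        · rw [hm] at hsingle; rw [hsingle, hM]; exact (φ b).le_max' x hx
        · exact (φ b).min'_le x hx
      exact hinj a ha b hb (by rw [hfa, hfb, hm])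
    · -- ma ≠ Ma : both a and b are adjacent to both ma and Ma
      by_contra hne'
      have hma : ma ∈ φ a := (φ a).min'_mem _
      have hMa : Ma ∈ φ a := (φ a).max'_mem _
      have hmb : ma ∈ φ b := hm ▸ (φ b).min'_mem _
      have hMb : Ma ∈ φ b := hM ▸ (φ b).max'_mem _
      exact p11_no_c4 a b ma Ma hne' hsingle
        (Finset.mem_filter.mp hma).2 (Finset.mem_filter.mp hMa).2
        (Finset.mem_filter.mp hmb).2 (Finset.mem_filter.mp hMb).2
  -- counting
  have hWcard : 7 ≤ Wf.card := by
    have hWc : Wf = (insert (10 : Fin 11) Tf)ᶜ := by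
      ext a
      simp only [hWfdef, Finset.mem_filter, Finset.mem_univ, true_and, Finset.mem_compl,
        Finset.mem_insert]
      tauto
    rw [hWc, Finset.card_compl]
    have h1 : (insert (10 : Fin 11) Tf).card ≤ Tf.card + 1 := Finset.card_insert_le _ _
    have h2 : Fintype.card (Fin 11) = 11 := by simp
    omega
  have himg : Wf.image code ⊆ Tf.sym2 := by
    intro x hx
    obtain ⟨a, ha, rfl⟩ := Finset.mem_image.mp hx
    rw [hcodedef]
    simp only [dif_pos (hne a ha)]
    rw [Finset.mk_mem_sym2_iff]
    exact ⟨(Finset.mem_filter.mp ((φ a).min'_mem _)).1,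
      (Finset.mem_filter.mp ((φ a).max'_mem _)).1⟩
  have h1 : Wf.card = (Wf.image code).card := (Finset.card_image_of_injOn
    (fun a ha b hb => hcodeinj a ha b hb)).symm
  have h2 : (Wf.image code).card ≤ Tf.sym2.card := Finset.card_le_card himg
  have h3 : Tf.sym2.card = Nat.choose (Tf.card + 1) 2 := Finset.card_sym2 Tf
  have h4 : Nat.choose (Tf.card + 1) 2 ≤ Nat.choose 4 2 :=
    Nat.choose_le_choose 2 (by omega)
  have h5 : Nat.choose 4 2 = 6 := by decide
  omega

lemma lower_bound {k : ℕ} {C : Set (Vk k)} (hC : (Gk k).LocatingDominatingSet C) :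
    4 * k ≤ C.ncard := by
  classical
  set Cf : Finset (Vk k) := (Set.toFinite C).toFinset with hCf
  have hcard : C.ncard = Cf.card := Set.ncard_eq_toFinset_card C (Set.toFinite C)
  set D : Fin k → Finset (Vk k) := fun i =>
    ((Set.toFinite {a : Fin 11 | some (i, a) ∈ C}).toFinset).image
      (fun a => (some (i, a) : Vk k)) with hD
  have hinj : ∀ i : Fin k, Function.Injective (fun a : Fin 11 => (some (i, a) : Vk k)) := by
    intro i a b h
    injection h with h'
    exact congrArg Prod.snd h'
  have hDcard : ∀ i, 4 ≤ (D i).card := by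
    intro i
    rw [hD]
    simp only
    rw [Finset.card_image_of_injective _ (hinj i)]
    have := copy_bound hC i
    have h2 := Set.ncard_eq_toFinset_card {a : Fin 11 | some (i, a) ∈ C}
      (Set.toFinite _)
    omega
  have hDsub : ∀ i ∈ (Finset.univ : Finset (Fin k)), D i ⊆ Cf := by
    intro i _ x hx
    rw [hD] at hx
    obtain ⟨a, ha, rfl⟩ := Finset.mem_image.mp hx
    rw [Set.Finite.mem_toFinset] at ha
    rw [hCf, Set.Finite.mem_toFinset]
    exact ha
  have hdisj : ∀ i ∈ (Finset.univ : Finset (Fin k)), ∀ j ∈ (Finset.univ : Finset (Fin k)),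
      i ≠ j → Disjoint (D i) (D j) := by
    intro i _ j _ hij
    rw [Finset.disjoint_left]
    intro x hxi hxj
    rw [hD] at hxi hxj
    obtain ⟨a, _, rfl⟩ := Finset.mem_image.mp hxi
    obtain ⟨b, _, hb⟩ := Finset.mem_image.mp hxj
    injection hb with hb'
    exact hij (congrArg Prod.fst hb').symm
  calc 4 * k = ∑ _i : Fin k, 4 := by
        rw [Finset.sum_const, Finset.card_univ, Fintype.card_fin, smul_eq_mul, Nat.mul_comm]
    _ ≤ ∑ i : Fin k, (D i).card := Finset.sum_le_sum (fun i _ => hDcard i)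
    _ = ((Finset.univ : Finset (Fin k)).biUnion D).card := (Finset.card_biUnion hdisj).symm
    _ ≤ Cf.card := Finset.card_le_card (Finset.biUnion_subset.mpr hDsub)
    _ = C.ncard := hcard.symm

/-! ### Minimum degree -/

lemma min_degree {k : ℕ} (hk : 3 ≤ k) (v : Vk k) : 3 ≤ ((Gk k).neighborSet v).ncard := by
  have hsub : ∀ (s : Set (Vk k)) (a b c : Vk k), a ≠ b → a ≠ c → b ≠ c →
      a ∈ s → b ∈ s → c ∈ s → 3 ≤ s.ncard := by
    intro s a b c hab hac hbc ha hb hc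
    have h3 : ({a, b, c} : Set (Vk k)).ncard = 3 := by
      rw [Set.ncard_eq_three]; exact ⟨a, b, c, hab, hac, hbc, rfl⟩
    have hsub' : ({a, b, c} : Set (Vk k)) ⊆ s := by
      intro x hx
      rcases hx with rfl | rfl | rfl
      · exact ha
      · exact hb
      · exact hc
    calc 3 = ({a, b, c} : Set (Vk k)).ncard := h3.symm
      _ ≤ s.ncard := Set.ncard_le_ncard hsub' (Set.toFinite s)
  match v with
  | none =>
    refine hsub _ (some (⟨0, by omega⟩, 10)) (some (⟨1, by omega⟩, 10))
      (some (⟨2, by omega⟩, 10)) ?_ ?_ ?_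
      (show (Gk k).Adj none (some (⟨0, by omega⟩, 10)) from rfl)
      (show (Gk k).Adj none (some (⟨1, by omega⟩, 10)) from rfl)
      (show (Gk k).Adj none (some (⟨2, by omega⟩, 10)) from rfl)
    all_goals simp [Fin.ext_iff]
  | some (i, a) =>
    by_cases h10 : a = 10
    · subst h10
      refine hsub _ (some (i, 0)) (some (i, 1)) none ?_ ?_ ?_ ?_ ?_ ?_
      · simp
      · simp
      · simp
      · exact ⟨rfl, by decide⟩
      · exact ⟨rfl, by decide⟩
      · exact (show (Gk k).Adj (some (i, 10)) none from rfl)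
    · obtain ⟨b, c, d, hbc, hbd, hcd, h1, h2, h3⟩ := padj_deg a h10
      refine hsub _ (some (i, b)) (some (i, c)) (some (i, d)) ?_ ?_ ?_
        ⟨rfl, h1⟩ ⟨rfl, h2⟩ ⟨rfl, h3⟩
      all_goals simp [hbc, hbd, hcd]

/-- Proposition: for every `k ≥ 3` there is a connected graph of order `n = 11k+1`,
girth at least 5, minimum degree at least 3, and location-domination number
`4k = (4/11)·(n-1)`. -/
theorem exists_connected_graph_gammaLD_eq_four_elevenths
    (k : ℕ) (hk : 3 ≤ k) :
    ∃ (V : Type) (inst : Fintype V) (G : SimpleGraph V),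
      G.Connected ∧
      @Fintype.card V inst = 11 * k + 1 ∧
      5 ≤ G.egirth ∧
      (∀ v : V, 3 ≤ (G.neighborSet v).ncard) ∧
      G.gammaLD = 4 * k := by
  refine ⟨Vk k, inferInstance, Gk k, Gk_connected k, ?_, Gk_egirth, min_degree hk, ?_⟩
  · rw [Fintype.card_option, Fintype.card_prod, Fintype.card_fin, Fintype.card_fin]
    omega
  · have hmem : 4 * k ∈ {m : ℕ | ∃ C : Set (Vk k), (Gk k).LocatingDominatingSet C ∧
        C.ncard = m} :=
      ⟨↑(Cfin k), upper_LD hk, by rw [Set.ncard_coe_finset, card_Cfin]⟩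
    apply le_antisymm
    · exact Nat.sInf_le hmem
    · apply le_csInf ⟨4 * k, hmem⟩
      rintro m ⟨C, hC, rfl⟩
      exact lower_bound hC
end
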